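/- A finite simple graph G is 3-colorable if and only if there exist 3-dimensional quantum states ρ_{y,z} (one for each vertex y of G' and each z ∈ {1,2,3}) and, for each vertex y' of G', a 3-dimensional POVM (E_{y',1}, E_{y',2}, E_{y',3}) such that the matrix with entries p_{(y,z),(y',z')} = tr(ρ_{y,z} E_{y',z'}) fits Δ(G'). -/

import Mathlib

open Matrix
open scoped ComplexOrder

variable {d : ℕ}

lemma trace_conjTranspose_mul_self_eq_zero {m n : Type*} [Fintype m] [Fintype n]
    (M : Matrix m n ℂ) (h : (Mᴴ * M).trace = 0) : M = 0 := by
  have h1 : ∀ j, dotProduct (star (fun i => M i j)) (fun i => M i j) = 0 := by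
    have := (Fintype.sum_eq_zero_iff_of_nonneg (f := fun j =>
      dotProduct (star (fun i => M i j)) (fun i => M i j))
      (fun j => dotProduct_star_self_nonneg _)).mp ?_
    · intro j; exact congrFun this j
    · rw [← h]; unfold Matrix.trace
      apply Finset.sum_congr rfl
      intro j _
      simp [Matrix.mul_apply, dotProduct, conjTranspose_apply]
  ext i j
  have := dotProduct_star_self_eq_zero.mp (h1 j)
  exact congrFun this i

section
open scoped MatrixOrder

lemma mul_eq_zero_of_trace_psd {A B : Matrix (Fin d) (Fin d) ℂ}
    (hA : A.PosSemidef) (hB : B.PosSemidef) (h : (A * B).trace = 0) : A * B = 0 := by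
  set sA := CFC.sqrt A with hsA
  set sB := CFC.sqrt B with hsB
  have hAe : sA * sA = A := CFC.sqrt_mul_sqrt_self A hA.nonneg
  have hBe : sB * sB = B := CFC.sqrt_mul_sqrt_self B hB.nonneg
  have hAH : sAᴴ = sA := (CFC.sqrt_nonneg A).posSemidef.isHermitian.eq
  have hBH : sBᴴ = sB := (CFC.sqrt_nonneg B).posSemidef.isHermitian.eq
  have hM : (sA * sB) = 0 := by
    apply trace_conjTranspose_mul_self_eq_zero
    have : (sA * sB)ᴴ * (sA * sB) = sB * A * sB := by
      rw [conjTranspose_mul, hAH, hBH, ← Matrix.mul_assoc, Matrix.mul_assoc sB sA sA, hAe]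
    rw [this, Matrix.trace_mul_cycle, hBe, Matrix.trace_mul_comm, h]
  calc A * B = sA * (sA * sB) * sB := by rw [← hAe, ← hBe]; noncomm_ring
  _ = 0 := by rw [hM]; simp

end

section Vec

lemma ortho_symm {x y : Fin 3 → ℂ} (h : star x ⬝ᵥ y = 0) : star y ⬝ᵥ x = 0 := by
  have := congrArg star h
  rwa [star_dotProduct, star_star, star_zero] at this

lemma unit_ne_zero {x : Fin 3 → ℂ} (h : star x ⬝ᵥ x = 1) : x ≠ 0 := by
  intro h0; rw [h0] at h; simp at h

lemma star_cross (u v : Fin 3 → ℂ) : star (u ⨯₃ v) = star u ⨯₃ star v := by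
  funext i
  fin_cases i <;>
    simp [cross_apply, Pi.star_apply, star_sub, star_mul', mul_comm]

lemma bac_cab (u v w : Fin 3 → ℂ) :
    u ⨯₃ (v ⨯₃ w) = (u ⬝ᵥ w) • v - (u ⬝ᵥ v) • w := by
  funext i
  fin_cases i <;>
    simp [cross_apply, dotProduct, Fin.sum_univ_three] <;> ring

lemma parallel_of_cross_eq_zero {u w : Fin 3 → ℂ} (h : u ⨯₃ w = 0) (hu : u ≠ 0) :
    ∃ c : ℂ, w = c • u := by
  by_contra hc
  push_neg at hc
  have : u ⨯₃ w ≠ 0 := by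
    rw [crossProduct_ne_zero_iff_linearIndependent, LinearIndependent.pair_iff' hu]
    intro c
    exact (hc c).symm ∘ Eq.symm ∘ Eq.symm
  exact this h

lemma perp_perp {x a b : Fin 3 → ℂ} (ha : x ⬝ᵥ a = 0) (hb : x ⬝ᵥ b = 0)
    (hab : a ⨯₃ b ≠ 0) : ∃ c : ℂ, x = c • (a ⨯₃ b) := by
  have h1 : (a ⨯₃ b) ⨯₃ x = 0 := by
    have h2 : x ⨯₃ (a ⨯₃ b) = 0 := by
      rw [bac_cab, ha, hb]; simp
    rw [← cross_anticomm, h2, neg_zero]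
  exact parallel_of_cross_eq_zero h1 hab

end Vec

lemma gadget_dichotomy (vi vj va vb vc vd : Fin 3 → ℂ)
    (ui : star vi ⬝ᵥ vi = 1) (uj : star vj ⬝ᵥ vj = 1)
    (ua : star va ⬝ᵥ va = 1) (ub : star vb ⬝ᵥ vb = 1)
    (uc : star vc ⬝ᵥ vc = 1) (ud : star vd ⬝ᵥ vd = 1)
    (hia : star vi ⬝ᵥ va = 0) (hib : star vi ⬝ᵥ vb = 0) (hid : star vi ⬝ᵥ vd = 0)
    (hab : star va ⬝ᵥ vb = 0) (haj : star va ⬝ᵥ vj = 0) (hbc : star vb ⬝ᵥ vc = 0)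
    (hcd : star vc ⬝ᵥ vd = 0) (hcj : star vc ⬝ᵥ vj = 0) (hdj : star vd ⬝ᵥ vj = 0) :
    star vi ⬝ᵥ vj = 0 ∨ ∃ c : ℂ, vj = c • vi := by
  by_cases ht : star vi ⬝ᵥ vj = 0
  · exact Or.inl ht
  right
  by_cases hx : vi ⨯₃ vj = 0
  · exact parallel_of_cross_eq_zero hx (unit_ne_zero ui)
  exfalso
  have hk' : star (vi ⨯₃ vj) = star vi ⨯₃ star vj := star_cross vi vj
  have hvine : vi ≠ 0 := unit_ne_zero ui
  have hvjne : vj ≠ 0 := unit_ne_zero uj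
  have hnp : ∀ c : ℂ, vj ≠ c • vi := by
    intro c hc
    apply hx
    rw [hc, LinearMap.map_smul, cross_self, smul_zero]
  have hnp' : ∀ c : ℂ, vi ≠ c • vj := by
    intro c hc
    apply hx
    rw [hc, LinearMap.map_smul₂, cross_self, smul_zero]
  obtain ⟨α, hva⟩ : ∃ c : ℂ, star va = c • (vi ⨯₃ vj) :=
    perp_perp (ortho_symm hia) haj hx
  obtain ⟨δ, hvd⟩ : ∃ c : ℂ, star vd = c • (vi ⨯₃ vj) :=
    perp_perp (ortho_symm hid) hdj hx
  have hαne : α ≠ 0 := by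
    rintro rfl
    rw [zero_smul] at hva
    exact star_ne_zero.mpr (unit_ne_zero ua) hva
  have hδne : δ ≠ 0 := by
    rintro rfl
    rw [zero_smul] at hvd
    exact star_ne_zero.mpr (unit_ne_zero ud) hvd
  set t := star vi ⬝ᵥ vj with htdef
  -- useful dot products
  have dii : vi ⬝ᵥ star vi = 1 := by rw [dotProduct_comm]; exact ui
  have dij : vi ⬝ᵥ star vj = star t := by
    rw [dotProduct_star, dotProduct_comm]
  have dji : vj ⬝ᵥ star vi = t := by rw [dotProduct_comm]
  have djj : vj ⬝ᵥ star vj = 1 := by rw [dotProduct_comm]; exact uj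
  have dji' : star vj ⬝ᵥ vi = star t := by
    rw [star_dotProduct]
  -- b is parallel to vi ⨯₃ k'
  have hbk' : star vb ⬝ᵥ star (vi ⨯₃ vj) = 0 := by
    have h1 : star vb ⬝ᵥ va = 0 := ortho_symm hab
    have hva' : va = star α • star (vi ⨯₃ vj) := by
      have := congrArg star hva
      simp only [star_smul, star_star] at this
      exact this
    rw [hva', dotProduct_smul, smul_eq_zero] at h1
    exact h1.resolve_left (star_ne_zero.mpr hαne)
  have hik' : vi ⨯₃ star (vi ⨯₃ vj) = star t • star vi - star vj := by
    rw [hk', bac_cab, dij, dii, one_smul]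
  have hik'ne : vi ⨯₃ star (vi ⨯₃ vj) ≠ 0 := by
    rw [hik']
    intro h
    have h2 : star vj = star t • star vi := (sub_eq_zero.mp h).symm
    apply hnp t
    have := congrArg star h2
    simp only [star_smul, star_star] at this
    exact this
  obtain ⟨β, hvb⟩ : ∃ c : ℂ, star vb = c • (vi ⨯₃ star (vi ⨯₃ vj)) :=
    perp_perp (ortho_symm hib) hbk' hik'ne
  have hβne : β ≠ 0 := by
    rintro rfl
    rw [zero_smul] at hvb
    exact star_ne_zero.mpr (unit_ne_zero ub) hvb
  -- c is parallel to vj ⨯₃ k'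
  have hck' : star vc ⬝ᵥ star (vi ⨯₃ vj) = 0 := by
    have hvd' : vd = star δ • star (vi ⨯₃ vj) := by
      have := congrArg star hvd
      simp only [star_smul, star_star] at this
      exact this
    have h1 := hcd
    rw [hvd', dotProduct_smul, smul_eq_zero] at h1
    exact h1.resolve_left (star_ne_zero.mpr hδne)
  have hjk' : vj ⨯₃ star (vi ⨯₃ vj) = star vi - t • star vj := by
    rw [hk', bac_cab, djj, dji, one_smul]
  have hjk'ne : vj ⨯₃ star (vi ⨯₃ vj) ≠ 0 := by
    rw [hjk']
    intro h
    have h2 : star vi = t • star vj := sub_eq_zero.mp h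
    apply hnp' (star t)
    have := congrArg star h2
    simp only [star_smul, star_star] at this
    exact this
  obtain ⟨γ, hvc⟩ : ∃ c : ℂ, star vc = c • (vj ⨯₃ star (vi ⨯₃ vj)) :=
    perp_perp hcj hck' hjk'ne
  have hγne : γ ≠ 0 := by
    rintro rfl
    rw [zero_smul] at hvc
    exact star_ne_zero.mpr (unit_ne_zero uc) hvc
  -- the b ⊥ c relation forces |t| = 1
  have hvc' : vc = star γ • (vi - star t • vj) := by
    rw [hjk'] at hvc
    have := congrArg star hvc
    simp only [star_smul, star_star, star_sub] at this
    exact this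
  have h1 := hbc
  rw [hvb, hik', hvc'] at h1
  simp only [smul_dotProduct, dotProduct_smul, sub_dotProduct, dotProduct_sub,
    smul_eq_mul] at h1
  rw [ui, uj, dji', ← htdef] at h1
  have hfac : star γ * (β * (star t * (1 - star t * t))) = 0 := by
    linear_combination h1
  have h2 : star t * (1 - star t * t) = 0 := by
    rcases mul_eq_zero.mp hfac with h | h
    · exact absurd h (star_ne_zero.mpr hγne)
    rcases mul_eq_zero.mp h with h | h
    · exact absurd h hβne
    · exact h
  have key : star t * t = 1 := by
    rcases mul_eq_zero.mp h2 with h | h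
    · exact absurd h (star_ne_zero.mpr ht)
    · linear_combination -h
  -- conclude vj = t • vi, contradiction
  have hu0 : star (vj - t • vi) ⬝ᵥ (vj - t • vi) = 0 := by
    simp only [star_sub, star_smul, sub_dotProduct, dotProduct_sub,
      smul_dotProduct, dotProduct_smul, smul_eq_mul]
    rw [ui, uj, dji', ← htdef]
    linear_combination (1 : ℂ) - key
  have : vj - t • vi = 0 := dotProduct_star_self_eq_zero.mp hu0
  exact hnp t (sub_eq_zero.mp this)

section VMV

lemma vecMulVec_mul_vecMulVec (a b c e : Fin 3 → ℂ) :
    vecMulVec a b * vecMulVec c e = (b ⬝ᵥ c) • vecMulVec a e := by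
  ext i j
  simp only [Matrix.mul_apply, vecMulVec_apply, Matrix.smul_apply, smul_eq_mul, dotProduct,
    Finset.sum_mul, Finset.mul_sum]
  apply Finset.sum_congr rfl
  intro k _
  ring

lemma trace_vecMulVec (a b : Fin 3 → ℂ) : (vecMulVec a b).trace = a ⬝ᵥ b := by
  simp [Matrix.trace, Matrix.diag, vecMulVec_apply, dotProduct]

lemma ortho_of_vmv_mul_eq_zero {v u : Fin 3 → ℂ}
    (h : vecMulVec v (star v) * vecMulVec u (star u) = 0) : star v ⬝ᵥ u = 0 := by
  have h1 := congrArg Matrix.trace h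
  rw [vecMulVec_mul_vecMulVec, trace_smul, trace_vecMulVec, trace_zero, smul_eq_mul] at h1
  have h2 : v ⬝ᵥ star u = star (star v ⬝ᵥ u) := by rw [dotProduct_comm, star_dotProduct]
  rw [h2] at h1
  rcases mul_eq_zero.mp h1 with h | h
  · exact h
  · exact star_eq_zero.mp h

end VMV

lemma vertex_struct {ρ E : Fin 3 → Matrix (Fin 3) (Fin 3) ℂ}
    (hρ : ∀ z, (ρ z).PosSemidef) (hτ : ∀ z, (ρ z).trace = 1)
    (hE : ∀ z, (E z).PosSemidef) (hsum : ∑ z, E z = 1)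
    (hoff : ∀ z z', z ≠ z' → (ρ z * E z').trace = 0) :
    ∃ w : Fin 3 → ℂ, star w ⬝ᵥ w = 1 ∧ ρ 0 = vecMulVec w (star w) ∧ ρ 0 * E 0 = ρ 0 := by
  -- products with mismatched POVM elements vanish
  have hze : ∀ z z', z ≠ z' → ρ z * E z' = 0 := fun z z' hne =>
    mul_eq_zero_of_trace_psd (hρ z) (hE z') (hoff z z' hne)
  have hrE : ∀ z, ρ z * E z = ρ z := by
    intro z
    have h1 : ρ z = ∑ z', ρ z * E z' := by
      rw [← Finset.mul_sum, hsum, mul_one]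
    have h2 : ∑ z', ρ z * E z' = ρ z * E z := by
      apply Finset.sum_eq_single_of_mem z (Finset.mem_univ z)
      intro b _ hb
      exact hze z b (fun h => hb h.symm)
    exact (h1.trans h2).symm
  have hEr : ∀ z, E z * ρ z = ρ z := by
    intro z
    have := congrArg Matrix.conjTranspose (hrE z)
    rwa [Matrix.conjTranspose_mul, (hρ z).isHermitian.eq, (hE z).isHermitian.eq] at this
  have hρρ : ∀ z z', z ≠ z' → ρ z * ρ z' = 0 := by
    intro z z' hne
    calc ρ z * ρ z' = ρ z * (E z' * ρ z') := by rw [hEr]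
    _ = (ρ z * E z') * ρ z' := by rw [Matrix.mul_assoc]
    _ = 0 := by rw [hze z z' hne, Matrix.zero_mul]
  -- pick a nonzero diagonal entry for each state
  have hdiag : ∀ z, ∃ p, ρ z p p ≠ 0 := by
    intro z
    by_contra hc
    push_neg at hc
    have : (ρ z).trace = 0 := by
      unfold Matrix.trace
      exact Finset.sum_eq_zero fun p _ => hc p
    rw [hτ z] at this
    exact one_ne_zero this
  choose p hp using hdiag
  -- the (normalized) columns
  set w : Fin 3 → Fin 3 → ℂ := fun z i => ρ z i (p z) with hwdef
  have hdot : ∀ z z', star (w z) ⬝ᵥ w z' = (ρ z * ρ z') (p z) (p z') := by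
    intro z z'
    simp only [hwdef, dotProduct, Pi.star_apply, Matrix.mul_apply]
    apply Finset.sum_congr rfl
    intro i _
    rw [(hρ z).isHermitian.apply (p z) i]
  have hworth : ∀ z z', z ≠ z' → star (w z) ⬝ᵥ w z' = 0 := by
    intro z z' hne
    rw [hdot, hρρ z z' hne, Matrix.zero_apply]
  have hwne : ∀ z, w z ≠ 0 := by
    intro z h0
    apply hp z
    have := congrFun h0 (p z)
    simpa [hwdef] using this
  -- the norms
  have hnorm : ∀ z, ∃ r : ℝ, 0 < r ∧ star (w z) ⬝ᵥ w z = (r : ℂ) := by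
    intro z
    have h1 : 0 ≤ star (w z) ⬝ᵥ w z := dotProduct_star_self_nonneg (w z)
    have h2 : star (w z) ⬝ᵥ w z ≠ 0 := fun h => hwne z (dotProduct_star_self_eq_zero.mp h)
    rw [Complex.le_def] at h1
    simp only [Complex.zero_re, Complex.zero_im] at h1
    have heq : star (w z) ⬝ᵥ w z = ((star (w z) ⬝ᵥ w z).re : ℂ) := by
      apply Complex.ext
      · simp
      · simp only [Complex.ofReal_im]
        exact h1.2.symm
    refine ⟨(star (w z) ⬝ᵥ w z).re, ?_, heq⟩
    rcases lt_or_eq_of_le h1.1 with h | h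
    · exact h
    · exfalso
      apply h2
      rw [heq, ← h]
      simp
  choose r hrpos hrval using hnorm
  set v : Fin 3 → Fin 3 → ℂ := fun z => (((Real.sqrt (r z) : ℝ) : ℂ))⁻¹ • w z with hvdef
  have hsne : ∀ z, ((Real.sqrt (r z) : ℝ) : ℂ) ≠ 0 := by
    intro z
    simp only [ne_eq, Complex.ofReal_eq_zero]
    exact ne_of_gt (Real.sqrt_pos.mpr (hrpos z))
  have hvunit : ∀ z, star (v z) ⬝ᵥ v z = 1 := by
    intro z
    rw [hvdef]
    simp only [star_smul, smul_dotProduct, dotProduct_smul, smul_eq_mul, star_inv₀,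
      Complex.star_def, Complex.conj_ofReal]
    rw [hrval z]
    have h3 : ((Real.sqrt (r z) : ℝ) : ℂ) * ((Real.sqrt (r z) : ℝ) : ℂ) = ((r z : ℝ) : ℂ) := by
      rw [← Complex.ofReal_mul, Real.mul_self_sqrt (hrpos z).le]
    field_simp [hsne z]
    linear_combination -h3
  have hvorth : ∀ z z', z ≠ z' → star (v z) ⬝ᵥ v z' = 0 := by
    intro z z' hne
    rw [hvdef]
    simp only [star_smul, smul_dotProduct, dotProduct_smul, smul_eq_mul]
    rw [hworth z z' hne]
    ring
  have hvcol : ∀ z z', z ≠ z' → ρ z *ᵥ v z' = 0 := by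
    intro z z' hne
    rw [hvdef]
    rw [Matrix.mulVec_smul]
    have h4 : ρ z *ᵥ w z' = 0 := by
      funext i
      simp only [Matrix.mulVec, dotProduct, hwdef]
      have : ∑ k, ρ z i k * ρ z' k (p z') = (ρ z * ρ z') i (p z') := by
        rw [Matrix.mul_apply]
      rw [this, hρρ z z' hne]
      simp
    rw [h4, smul_zero]
  set U : Matrix (Fin 3) (Fin 3) ℂ := Matrix.of (fun i z => v z i) with hUdef
  have hUU : Uᴴ * U = 1 := by
    ext z z'
    rw [Matrix.mul_apply, Matrix.one_apply]
    have : ∑ i, Uᴴ z i * U i z' = star (v z) ⬝ᵥ v z' := by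
      apply Finset.sum_congr rfl
      intro i _
      simp [hUdef, Matrix.conjTranspose_apply, dotProduct]
    rw [this]
    by_cases h : z = z'
    · subst h; rw [hvunit z, if_pos rfl]
    · rw [hvorth z z' h, if_neg h]
  have hU'U : U * Uᴴ = 1 := mul_eq_one_comm.mp hUU
  set M : Matrix (Fin 3) (Fin 3) ℂ := Uᴴ * ρ 0 * U with hMdef
  have hMform : ∀ z z', M z z' = star (v z) ⬝ᵥ (ρ 0 *ᵥ v z') := by
    intro z z'
    rw [hMdef, Matrix.mul_assoc, Matrix.mul_apply]
    simp only [Matrix.conjTranspose_apply, dotProduct, Matrix.mulVec, Matrix.mul_apply,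
      hUdef, Matrix.of_apply, dotProduct]
    apply Finset.sum_congr rfl
    intro i _
    rfl
  have hMcol : ∀ z z', z' ≠ 0 → M z z' = 0 := by
    intro z z' hne
    rw [hMform, hvcol 0 z' (fun h => hne h.symm), dotProduct_zero]
  have hMherm : Mᴴ = M := by
    rw [hMdef]
    simp only [Matrix.conjTranspose_mul, Matrix.conjTranspose_conjTranspose,
      (hρ 0).isHermitian.eq, Matrix.mul_assoc]
  have hMrow : ∀ z, z ≠ 0 → M z 0 = 0 := by
    intro z hz
    have : M z 0 = star (M 0 z) := by
      rw [← hMherm, Matrix.conjTranspose_apply, hMherm]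
    rw [this, hMcol 0 z hz, star_zero]
  have htrM : M.trace = 1 := by
    rw [hMdef, Matrix.trace_mul_cycle, hU'U, Matrix.one_mul, hτ 0]
  have hM00 : M 0 0 = 1 := by
    rw [Matrix.trace_fin_three] at htrM
    rw [hMcol 1 1 (by decide), hMcol 2 2 (by decide)] at htrM
    simpa using htrM
  have hMe : ∀ z z', M z z' = if z = 0 ∧ z' = 0 then 1 else 0 := by
    intro z z'
    by_cases h1 : z' = 0
    · subst h1
      by_cases h2 : z = 0
      · subst h2; simp [hM00]
      · rw [hMrow z h2, if_neg (by simp [h2])]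
    · rw [hMcol z z' h1, if_neg (by simp [h1])]
  have hρ0 : ρ 0 = U * M * Uᴴ := by
    have h5 : U * M * Uᴴ = U * Uᴴ * ρ 0 * (U * Uᴴ) := by
      rw [hMdef]
      simp only [Matrix.mul_assoc]
    rw [h5, hU'U, Matrix.one_mul, Matrix.mul_one]
  refine ⟨v 0, hvunit 0, ?_, hrE 0⟩
  rw [hρ0]
  ext i j
  have e1 : ((1 : Fin 3) = 0) = False := eq_false (by decide)
  have e2 : ((2 : Fin 3) = 0) = False := eq_false (by decide)
  simp [Matrix.mul_apply, Fin.sum_univ_three, hMe, Matrix.conjTranspose_apply,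
    Matrix.vecMulVec_apply, hUdef, e1, e2]

lemma card_le_three {ι : Type*} [Fintype ι] (g : ι → Fin 3 → ℂ)
    (hunit : ∀ i, star (g i) ⬝ᵥ g i = 1)
    (horth : ∀ i j, i ≠ j → star (g i) ⬝ᵥ g j = 0) : Fintype.card ι ≤ 3 := by
  have hli : LinearIndependent ℂ g := by
    rw [Fintype.linearIndependent_iff]
    intro c hc i
    have h1 := congrArg (fun x => star (g i) ⬝ᵥ x) hc
    simp only [dotProduct_zero] at h1
    rw [dotProduct] at h1
    simp only [Finset.sum_apply, Pi.smul_apply, smul_eq_mul, Finset.mul_sum] at h1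
    rw [Finset.sum_comm] at h1
    have h2 : ∀ j, ∑ x, star (g i) x * (c j * g j x) = c j * (star (g i) ⬝ᵥ g j) := by
      intro j
      rw [dotProduct, Finset.mul_sum]
      apply Finset.sum_congr rfl
      intro x _
      ring
    rw [Finset.sum_congr rfl (fun j _ => h2 j)] at h1
    have h3 : ∑ j, c j * (star (g i) ⬝ᵥ g j) = c i := by
      rw [Finset.sum_eq_single_of_mem i (Finset.mem_univ i)]
      · rw [hunit i, mul_one]
      · intro b _ hb
        rw [horth i b (fun h => hb h.symm), mul_zero]
    rw [h3] at h1
    exact h1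
  have := hli.fintype_card_le_finrank
  rwa [Module.finrank_fin_fun] at this

lemma proj_eq_of_parallel {x y : Fin 3 → ℂ} (hx : star x ⬝ᵥ x = 1) (hy : star y ⬝ᵥ y = 1)
    {c : ℂ} (hc : y = c • x) : vecMulVec y (star y) = vecMulVec x (star x) := by
  have hcc : star c * c = 1 := by
    rw [hc] at hy
    simp only [star_smul, smul_dotProduct, dotProduct_smul, smul_eq_mul] at hy
    rw [hx] at hy
    linear_combination hy
  ext i j
  rw [hc]
  simp only [vecMulVec_apply, Pi.smul_apply, Pi.star_apply, smul_eq_mul, star_mul']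
  linear_combination (x i * star (x j)) * hcc

/-- Vertices of the graph `G'`: the original vertices of `G` together with, for every
pair `{i,j}` of distinct vertices (represented as `i < j`), four new gadget vertices
`a_{ij}, b_{ij}, c_{ij}, d_{ij}` encoded as `Fin 4` (`0 = a`, `1 = b`, `2 = c`, `3 = d`). -/
abbrev GVert (n : ℕ) := Fin n ⊕ ({p : Fin n × Fin n // p.1 < p.2} × Fin 4)

/-- The edges of `G'`: the original edges of `G`, and for every pair `i < j` the nine
gadget edges `{i,a},{i,b},{i,d},{a,b},{a,j},{b,c},{c,d},{c,j},{d,j}`. -/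
def gadgetRel {n : ℕ} (G : SimpleGraph (Fin n)) : GVert n → GVert n → Prop
  | Sum.inl i, Sum.inl j => G.Adj i j
  | Sum.inl v, Sum.inr (⟨(i, j), _⟩, k) =>
      (v = i ∧ (k = 0 ∨ k = 1 ∨ k = 3)) ∨ (v = j ∧ (k = 0 ∨ k = 2 ∨ k = 3))
  | Sum.inr (p, k), Sum.inr (q, l) =>
      p = q ∧ ((k = 0 ∧ l = 1) ∨ (k = 1 ∧ l = 2) ∨ (k = 2 ∧ l = 3))
  | _, _ => False

/-- The graph `G'` obtained from `G` by inserting the gadget `H_{ij}` for every pair of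
distinct vertices `i, j` of `G`. -/
def gadgetGraph {n : ℕ} (G : SimpleGraph (Fin n)) : SimpleGraph (GVert n) :=
  SimpleGraph.fromRel (gadgetRel G)

/-- The triangle decoration `Δ(H)` of a graph `H`: each vertex `w` becomes the triangle
`(w,1),(w,2),(w,3)` (here `(w,0),(w,1),(w,2)`), with `(w,0)` identified with `w`. -/
def triDec {W : Type*} (H : SimpleGraph W) : SimpleGraph (W × Fin 3) :=
  SimpleGraph.fromRel fun a b =>
    (a.2 = 0 ∧ b.2 = 0 ∧ H.Adj a.1 b.1) ∨ (a.1 = b.1 ∧ a.2 ≠ b.2)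

/-- A matrix `A` fits a graph `H` if all its diagonal entries are `1` and `A v w = 0`
whenever `{v,w}` is an edge of `H`. -/
def Fits {V R : Type*} [Zero R] [One R] (H : SimpleGraph V) (A : Matrix V V R) : Prop :=
  (∀ v, A v v = 1) ∧ ∀ v w, H.Adj v w → A v w = 0

/-- A `d`-dimensional quantum state: a positive semidefinite complex `d × d` matrix of trace 1. -/
def IsState {d : ℕ} (ρ : Matrix (Fin d) (Fin d) ℂ) : Prop :=
  ρ.PosSemidef ∧ ρ.trace = 1

/-- A `d`-dimensional POVM with `Z` outcomes: positive semidefinite complex `d × d` matrices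
summing to the identity. -/
def IsPOVM {d Z : ℕ} (E : Fin Z → Matrix (Fin d) (Fin d) ℂ) : Prop :=
  (∀ z, (E z).PosSemidef) ∧ ∑ z, E z = 1

lemma gadget_adj_of_rel {n : ℕ} {G : SimpleGraph (Fin n)} {a b : GVert n}
    (hne : a ≠ b) (h : gadgetRel G a b) : (gadgetGraph G).Adj a b := by
  rw [gadgetGraph, SimpleGraph.fromRel_adj]
  exact ⟨hne, Or.inl h⟩

lemma reverse_dir {n : ℕ} (G : SimpleGraph (Fin n))
    (ρ E : GVert n → Fin 3 → Matrix (Fin 3) (Fin 3) ℂ)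
    (hst : ∀ y z, IsState (ρ y z)) (hpov : ∀ y', IsPOVM (E y'))
    (hfit : Fits (triDec (gadgetGraph G))
      (Matrix.of fun a b : GVert n × Fin 3 => (ρ a.1 a.2 * E b.1 b.2).trace)) :
    G.Colorable 3 := by
  classical
  -- structure at each vertex
  have key : ∀ y : GVert n, ∃ w : Fin 3 → ℂ,
      star w ⬝ᵥ w = 1 ∧ ρ y 0 = vecMulVec w (star w) ∧ ρ y 0 * E y 0 = ρ y 0 := by
    intro y
    apply vertex_struct (fun z => (hst y z).1) (fun z => (hst y z).2)
      (fun z => (hpov y).1 z) (hpov y).2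
    intro z z' hne
    have hadj : (triDec (gadgetGraph G)).Adj (y, z) (y, z') := by
      rw [triDec, SimpleGraph.fromRel_adj]
      exact ⟨by simp [hne], Or.inl (Or.inr ⟨rfl, hne⟩)⟩
    exact hfit.2 (y, z) (y, z') hadj
  choose v hv1 hv2 hv3 using key
  -- orthogonality across edges of the gadget graph
  have horth : ∀ y y', (gadgetGraph G).Adj y y' → star (v y) ⬝ᵥ v y' = 0 := by
    intro y y' hadj
    have hadj2 : (triDec (gadgetGraph G)).Adj (y, 0) (y', 0) := by
      rw [triDec, SimpleGraph.fromRel_adj]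
      refine ⟨?_, Or.inl (Or.inl ⟨rfl, rfl, hadj⟩)⟩
      intro h
      exact hadj.ne (congrArg Prod.fst h)
    have htr : (ρ y 0 * E y' 0).trace = 0 := hfit.2 (y, 0) (y', 0) hadj2
    have h0 : ρ y 0 * E y' 0 = 0 :=
      mul_eq_zero_of_trace_psd (hst y 0).1 ((hpov y').1 0) htr
    have hEρ : E y' 0 * ρ y' 0 = ρ y' 0 := by
      have := congrArg Matrix.conjTranspose (hv3 y')
      rwa [Matrix.conjTranspose_mul, (hst y' 0).1.isHermitian.eq,
        ((hpov y').1 0).isHermitian.eq] at this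
    have h1 : ρ y 0 * ρ y' 0 = 0 := by
      calc ρ y 0 * ρ y' 0 = ρ y 0 * (E y' 0 * ρ y' 0) := by rw [hEρ]
      _ = (ρ y 0 * E y' 0) * ρ y' 0 := by rw [Matrix.mul_assoc]
      _ = 0 := by rw [h0, Matrix.zero_mul]
    rw [hv2 y, hv2 y'] at h1
    exact ortho_of_vmv_mul_eq_zero h1
  -- dichotomy for every ordered pair i < j
  have dich : ∀ (i j : Fin n), i < j →
      star (v (Sum.inl i)) ⬝ᵥ v (Sum.inl j) = 0 ∨
        ∃ c : ℂ, v (Sum.inl j) = c • v (Sum.inl i) := by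
    intro i j hlt
    set q : {p : Fin n × Fin n // p.1 < p.2} := ⟨(i, j), hlt⟩ with hq
    have hne : i ≠ j := ne_of_lt hlt
    have adjia : (gadgetGraph G).Adj (Sum.inl i) (Sum.inr (q, 0)) :=
      gadget_adj_of_rel (by simp) (Or.inl ⟨rfl, Or.inl rfl⟩)
    have adjib : (gadgetGraph G).Adj (Sum.inl i) (Sum.inr (q, 1)) :=
      gadget_adj_of_rel (by simp) (Or.inl ⟨rfl, Or.inr (Or.inl rfl)⟩)
    have adjid : (gadgetGraph G).Adj (Sum.inl i) (Sum.inr (q, 3)) :=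
      gadget_adj_of_rel (by simp) (Or.inl ⟨rfl, Or.inr (Or.inr rfl)⟩)
    have adjab : (gadgetGraph G).Adj (Sum.inr (q, 0)) (Sum.inr (q, 1)) :=
      gadget_adj_of_rel (by simp) ⟨rfl, Or.inl ⟨rfl, rfl⟩⟩
    have adjaj : (gadgetGraph G).Adj (Sum.inr (q, 0)) (Sum.inl j) := by
      refine ((gadget_adj_of_rel (by simp) ?_ : (gadgetGraph G).Adj (Sum.inl j) (Sum.inr (q, 0)))).symm
      exact Or.inr ⟨rfl, Or.inl rfl⟩
    have adjbc : (gadgetGraph G).Adj (Sum.inr (q, 1)) (Sum.inr (q, 2)) :=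
      gadget_adj_of_rel (by simp) ⟨rfl, Or.inr (Or.inl ⟨rfl, rfl⟩)⟩
    have adjcd : (gadgetGraph G).Adj (Sum.inr (q, 2)) (Sum.inr (q, 3)) :=
      gadget_adj_of_rel (by simp) ⟨rfl, Or.inr (Or.inr ⟨rfl, rfl⟩)⟩
    have adjcj : (gadgetGraph G).Adj (Sum.inr (q, 2)) (Sum.inl j) := by
      refine ((gadget_adj_of_rel (by simp) ?_ : (gadgetGraph G).Adj (Sum.inl j) (Sum.inr (q, 2)))).symm
      exact Or.inr ⟨rfl, Or.inr (Or.inl rfl)⟩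
    have adjdj : (gadgetGraph G).Adj (Sum.inr (q, 3)) (Sum.inl j) := by
      refine ((gadget_adj_of_rel (by simp) ?_ : (gadgetGraph G).Adj (Sum.inl j) (Sum.inr (q, 3)))).symm
      exact Or.inr ⟨rfl, Or.inr (Or.inr rfl)⟩
    exact gadget_dichotomy (v (Sum.inl i)) (v (Sum.inl j)) (v (Sum.inr (q, 0)))
      (v (Sum.inr (q, 1))) (v (Sum.inr (q, 2))) (v (Sum.inr (q, 3)))
      (hv1 _) (hv1 _) (hv1 _) (hv1 _) (hv1 _) (hv1 _)
      (horth _ _ adjia) (horth _ _ adjib) (horth _ _ adjid)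
      (horth _ _ adjab) (horth _ _ adjaj) (horth _ _ adjbc)
      (horth _ _ adjcd) (horth _ _ adjcj) (horth _ _ adjdj)
  -- projectors at the original vertices
  set Q : Fin n → Matrix (Fin 3) (Fin 3) ℂ :=
    fun i => vecMulVec (v (Sum.inl i)) (star (v (Sum.inl i))) with hQ
  have dich2 : ∀ i j : Fin n, i ≠ j →
      Q i = Q j ∨ star (v (Sum.inl i)) ⬝ᵥ v (Sum.inl j) = 0 := by
    intro i j hne
    rcases lt_or_gt_of_ne hne with h | h
    · rcases dich i j h with h1 | ⟨c, hc⟩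
      · exact Or.inr h1
      · exact Or.inl (proj_eq_of_parallel (hv1 _) (hv1 _) hc).symm
    · rcases dich j i h with h1 | ⟨c, hc⟩
      · exact Or.inr (ortho_symm h1)
      · exact Or.inl (proj_eq_of_parallel (hv1 _) (hv1 _) hc)
  have hQne : ∀ i j : Fin n, G.Adj i j → Q i ≠ Q j := by
    intro i j hadj hQeq
    have hadj' : (gadgetGraph G).Adj (Sum.inl i) (Sum.inl j) := by
      apply gadget_adj_of_rel
      · simp [hadj.ne]
      · exact hadj
    have ho : star (v (Sum.inl i)) ⬝ᵥ v (Sum.inl j) = 0 := horth _ _ hadj'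
    have ho' : star (v (Sum.inl j)) ⬝ᵥ v (Sum.inl i) = 0 := ortho_symm ho
    have h1 : (Q i * Q j).trace = 0 := by
      rw [hQ]
      rw [vecMulVec_mul_vecMulVec, ho, zero_smul, trace_zero]
    have h2 : (Q i * Q i).trace = 1 := by
      rw [hQ]
      rw [vecMulVec_mul_vecMulVec, hv1, one_smul, trace_vecMulVec, dotProduct_comm, hv1]
    nth_rewrite 2 [hQeq] at h2
    rw [h1] at h2
    exact zero_ne_one h2
  -- build the coloring from the (at most three) distinct projectors
  set S : Finset (Matrix (Fin 3) (Fin 3) ℂ) := Finset.image Q Finset.univ with hS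
  have hmem : ∀ i, Q i ∈ S := by
    intro i
    rw [hS]
    exact Finset.mem_image_of_mem Q (Finset.mem_univ i)
  have hrep : ∀ s : {x // x ∈ S}, ∃ i : Fin n, Q i = (s : Matrix (Fin 3) (Fin 3) ℂ) := by
    rintro ⟨s, hs⟩
    rw [hS] at hs
    obtain ⟨i, _, hi⟩ := Finset.mem_image.mp hs
    exact ⟨i, hi⟩
  choose rep hrepQ using hrep
  have hcard : Fintype.card {x // x ∈ S} ≤ 3 := by
    apply card_le_three (fun s => v (Sum.inl (rep s)))
    · intro s; exact hv1 _
    · intro s s' hne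
      have hrne : rep s ≠ rep s' := by
        intro h
        apply hne
        apply Subtype.ext
        rw [← hrepQ s, ← hrepQ s', h]
      rcases dich2 (rep s) (rep s') hrne with h | h
      · exfalso
        apply hne
        apply Subtype.ext
        rw [← hrepQ s, ← hrepQ s', h]
      · exact h
  -- the coloring
  have e := Fintype.equivFin {x // x ∈ S}
  refine ⟨SimpleGraph.Coloring.mk
    (fun i => Fin.castLE hcard (e ⟨Q i, hmem i⟩)) ?_⟩
  intro i j hadj hc
  apply hQne i j hadj
  have h1 := Fin.castLE_injective hcard hc
  have h2 := e.injective h1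
  exact congrArg Subtype.val h2

/-- colors assigned to the gadget vertices `a,b,c,d` given the colors of `i,j` -/
def gc (x y : Fin 3) (k : Fin 4) : Fin 3 :=
  if x = y then (if k = 0 ∨ k = 2 then x + 1 else x + 2)
  else (if k = 1 then y else if k = 2 then x else -(x + y))

lemma gc_ok : ∀ x y : Fin 3, ∀ k : Fin 4,
    ((k = 0 ∨ k = 1 ∨ k = 3) → gc x y k ≠ x) ∧
    ((k = 0 ∨ k = 2 ∨ k = 3) → gc x y k ≠ y) := by decide

lemma gc_adj : ∀ x y : Fin 3, ∀ k l : Fin 4,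
    ((k = 0 ∧ l = 1) ∨ (k = 1 ∧ l = 2) ∨ (k = 2 ∧ l = 3)) → gc x y k ≠ gc x y l := by decide

/-- the indicator state/measurement -/
noncomputable def ind (t : Fin 3) : Matrix (Fin 3) (Fin 3) ℂ :=
  Matrix.diagonal (fun m => if m = t then 1 else 0)

lemma ind_psd (t : Fin 3) : (ind t).PosSemidef := by
  rw [ind, Matrix.posSemidef_diagonal_iff]
  intro i
  split
  · exact zero_le_one
  · exact le_refl 0

lemma ind_trace (t : Fin 3) : (ind t).trace = 1 := by
  rw [ind, Matrix.trace_diagonal]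
  rw [Finset.sum_ite_eq' Finset.univ t (fun _ => (1:ℂ))]
  simp

lemma ind_sum (c : Fin 3) : ∑ z, ind (c + z) = 1 := by
  have h1 : ∀ m : Fin 3, ∑ z : Fin 3, (if m = c + z then (1:ℂ) else 0) = 1 := by
    intro m
    rw [show (∑ z : Fin 3, if m = c + z then (1:ℂ) else 0)
        = ∑ w : Fin 3, if m = w then (1:ℂ) else 0 from
      Fintype.sum_equiv (Equiv.addLeft c) _ _ (fun z => rfl)]
    rw [Finset.sum_ite_eq Finset.univ m (fun _ => (1:ℂ))]
    simp
  ext i j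
  rw [Matrix.sum_apply]
  by_cases hij : i = j
  · subst hij
    have : ∀ z : Fin 3, ind (c + z) i i = if i = c + z then (1:ℂ) else 0 := by
      intro z
      rw [ind, Matrix.diagonal_apply_eq]
    rw [Finset.sum_congr rfl (fun z _ => this z), h1 i, Matrix.one_apply_eq]
  · have : ∀ z : Fin 3, ind (c + z) i j = 0 := by
      intro z
      rw [ind, Matrix.diagonal_apply_ne _ hij]
    rw [Finset.sum_congr rfl (fun z _ => this z), Finset.sum_const, Matrix.one_apply_ne hij]
    simp

lemma ind_mul_trace (s t : Fin 3) : (ind s * ind t).trace = if s = t then 1 else 0 := by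
  rw [ind, ind, Matrix.diagonal_mul_diagonal, Matrix.trace_diagonal]
  rw [Finset.sum_eq_single s]
  · simp
  · intro b _ hb
    simp [hb]
  · simp

lemma forward_dir {n : ℕ} (G : SimpleGraph (Fin n)) (h : G.Colorable 3) :
    ∃ (ρ : GVert n → Fin 3 → Matrix (Fin 3) (Fin 3) ℂ)
      (E : GVert n → Fin 3 → Matrix (Fin 3) (Fin 3) ℂ),
      (∀ y z, IsState (ρ y z)) ∧ (∀ y', IsPOVM (E y')) ∧
      Fits (triDec (gadgetGraph G))
        (Matrix.of fun a b : GVert n × Fin 3 => (ρ a.1 a.2 * E b.1 b.2).trace) := by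
  classical
  obtain ⟨C⟩ := h
  set c' : GVert n → Fin 3 :=
    Sum.elim C (fun qk => gc (C qk.1.1.1) (C qk.1.1.2) qk.2) with hc'
  have hproper : ∀ a b, gadgetRel G a b → c' a ≠ c' b := by
    rintro (i | ⟨⟨⟨i1, j1⟩, hlt⟩, k⟩) (j | ⟨⟨⟨i2, j2⟩, hlt2⟩, l⟩) hr
    · exact C.valid hr
    · simp only [hc', Sum.elim_inl, Sum.elim_inr]
      rcases hr with ⟨hi, hk⟩ | ⟨hi, hk⟩
      · subst hi
        exact fun hh => (gc_ok (C _) (C _) l).1 hk hh.symm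
      · subst hi
        exact fun hh => (gc_ok (C _) (C _) l).2 hk hh.symm
    · exact hr.elim
    · obtain ⟨hq, hkl⟩ := hr
      have hv := congrArg Subtype.val hq
      injection hv with h1 h2
      subst h1
      subst h2
      simp only [hc', Sum.elim_inr]
      exact gc_adj (C i1) (C j1) k l hkl
  have hproper2 : ∀ a b, (gadgetGraph G).Adj a b → c' a ≠ c' b := by
    intro a b hadj
    rw [gadgetGraph, SimpleGraph.fromRel_adj] at hadj
    rcases hadj.2 with h | h
    · exact hproper a b h
    · exact (hproper b a h).symm
  refine ⟨fun y z => ind (c' y + z), fun y z => ind (c' y + z), ?_, ?_, ?_, ?_⟩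
  · intro y z
    exact ⟨ind_psd _, ind_trace _⟩
  · intro y
    exact ⟨fun z => ind_psd _, ind_sum (c' y)⟩
  · intro a
    show (ind (c' a.1 + a.2) * ind (c' a.1 + a.2)).trace = 1
    rw [ind_mul_trace, if_pos rfl]
  · intro a b hadj
    show (ind (c' a.1 + a.2) * ind (c' b.1 + b.2)).trace = 0
    rw [ind_mul_trace, if_neg]
    rw [triDec, SimpleGraph.fromRel_adj] at hadj
    rcases hadj.2 with (⟨h1, h2, h3⟩ | ⟨h1, h2⟩) | (⟨h1, h2, h3⟩ | ⟨h1, h2⟩)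
    · rw [h1, h2, add_zero, add_zero]
      exact hproper2 a.1 b.1 h3
    · rw [h1]
      exact fun hh => h2 (add_left_cancel hh)
    · rw [h1, h2, add_zero, add_zero]
      exact (hproper2 b.1 a.1 h3).symm
    · rw [h1]
      exact fun hh => h2 (add_left_cancel hh).symm

theorem stmt4 {n : ℕ} (G : SimpleGraph (Fin n)) :
    G.Colorable 3 ↔
      ∃ (ρ : GVert n → Fin 3 → Matrix (Fin 3) (Fin 3) ℂ)
        (E : GVert n → Fin 3 → Matrix (Fin 3) (Fin 3) ℂ),
        (∀ y z, IsState (ρ y z)) ∧ (∀ y', IsPOVM (E y')) ∧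
        Fits (triDec (gadgetGraph G))
          (Matrix.of fun a b : GVert n × Fin 3 => (ρ a.1 a.2 * E b.1 b.2).trace) := by
  constructor
  · exact forward_dir G
  · rintro ⟨ρ, E, hst, hpov, hfit⟩
    exact reverse_dir G ρ E hst hpov hfit
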